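/- The expression claimed by Leipnik for the lognormal characteristic function is incorrect: for any k < 0, the function ψ(t) := (1/(2π)) ∫_{k-i∞}^{k+i∞} sin(πs) Γ(s) exp(-(ln t + iπ/2)s + (σ²/2)s²) ds satisfies ψ(t) = O(t^{|k|}) as t → 0⁺; in particular ψ(t) → 0 as t → 0⁺, whereas the characteristic function of a lognormal random variable tends to 1 as t → 0⁺. -/

import Mathlib

open MeasureTheory Complex Set Filter Asymptotics

/-- Leipnik's claimed expression for the lognormal characteristic function, as a
contour integral along the vertical line Re(s) = k (here (1/(2πi)) ds with
s = k+iu becomes (1/(2π)) du). -/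
noncomputable def leipnikExpr (σ k : ℝ) (t : ℝ) : ℂ :=
  (1 / (2 * Real.pi)) * ∫ u : ℝ,
    Complex.sin (Real.pi * (k + u * Complex.I)) * Complex.Gamma (k + u * Complex.I) *
      Complex.exp (-(↑(Real.log t) + Complex.I * Real.pi / 2) * (k + u * Complex.I)
        + (σ:ℂ)^2 / 2 * (k + u * Complex.I)^2)

noncomputable def leipnikKer (σ k : ℝ) (u : ℝ) : ℂ :=
  Complex.sin (Real.pi * (k + u * Complex.I)) * Complex.Gamma (k + u * Complex.I) *
    Complex.exp (-(Complex.I * Real.pi / 2) * (k + u * Complex.I)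
      + (σ:ℂ)^2 / 2 * (k + u * Complex.I)^2)

lemma leipnik_integrand_eq (σ k t : ℝ) (u : ℝ) :
    Complex.sin (Real.pi * (k + u * Complex.I)) * Complex.Gamma (k + u * Complex.I) *
      Complex.exp (-(↑(Real.log t) + Complex.I * Real.pi / 2) * (k + u * Complex.I)
        + (σ:ℂ)^2 / 2 * (k + u * Complex.I)^2)
    = Complex.exp (-(Real.log t : ℂ) * (k + u * Complex.I)) * leipnikKer σ k u := by
  rw [leipnikKer]
  rw [show (-(↑(Real.log t) + Complex.I * Real.pi / 2) * (k + u * Complex.I)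
        + (σ:ℂ)^2 / 2 * (k + u * Complex.I)^2)
      = (-(Real.log t : ℂ) * (k + u * Complex.I)) +
        (-(Complex.I * Real.pi / 2) * (k + u * Complex.I)
          + (σ:ℂ)^2 / 2 * (k + u * Complex.I)^2) by ring]
  rw [Complex.exp_add]
  ring

lemma leipnik_norm_eq (σ k t : ℝ) (hk : k < 0) (ht : 0 < t) (u : ℝ) :
    ‖Complex.exp (-(Real.log t : ℂ) * (k + u * Complex.I)) * leipnikKer σ k u‖
    = t ^ |k| * ‖leipnikKer σ k u‖ := by
  rw [norm_mul]
  congr 1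
  rw [Complex.norm_exp, Real.rpow_def_of_pos ht]
  congr 1
  have : (-(Real.log t : ℂ) * ((k : ℂ) + (u : ℂ) * Complex.I)).re
      = Real.log t * (-k) := by
    simp [Complex.mul_re, Complex.add_re, Complex.add_im]
    try ring
  rw [this, abs_of_neg hk]

/-- Leipnik's expression is incorrect: for any k < 0, the function ψ(t) given by
the contour integral satisfies ψ(t) = O(t^{|k|}) as t → 0⁺, in particular
ψ(t) → 0 as t → 0⁺, whereas a characteristic function must tend to 1. -/
theorem leipnik_expr_tendsto_zero (σ k : ℝ) (hσ : 0 < σ) (hk : k < 0) :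
    (fun t : ℝ => leipnikExpr σ k t) =O[nhdsWithin 0 (Ioi 0)]
      (fun t : ℝ => t ^ |k|) ∧
    Tendsto (fun t : ℝ => leipnikExpr σ k t) (nhdsWithin 0 (Ioi 0)) (nhds 0) := by
  set C : ℝ := (1 / (2 * Real.pi)) * ∫ u : ℝ, ‖leipnikKer σ k u‖ with hC
  have hbig : (fun t : ℝ => leipnikExpr σ k t) =O[nhdsWithin 0 (Ioi 0)]
      (fun t : ℝ => t ^ |k|) := by
    apply IsBigO.of_bound C
    filter_upwards [self_mem_nhdsWithin] with t ht
    have ht : (0:ℝ) < t := ht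
    have h1 : leipnikExpr σ k t
        = (1 / (2 * Real.pi)) * ∫ u : ℝ,
            Complex.exp (-(Real.log t : ℂ) * (k + u * Complex.I)) * leipnikKer σ k u := by
      rw [leipnikExpr]
      congr 1
      exact integral_congr_ae (Filter.Eventually.of_forall fun u => leipnik_integrand_eq σ k t u)
    rw [h1]
    have h2 : ‖∫ u : ℝ,
          Complex.exp (-(Real.log t : ℂ) * (k + u * Complex.I)) * leipnikKer σ k u‖
        ≤ t ^ |k| * ∫ u : ℝ, ‖leipnikKer σ k u‖ := by
      calc ‖∫ u : ℝ, Complex.exp (-(Real.log t : ℂ) * (k + u * Complex.I)) * leipnikKer σ k u‖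
          ≤ ∫ u : ℝ, ‖Complex.exp (-(Real.log t : ℂ) * (k + u * Complex.I)) * leipnikKer σ k u‖ :=
            norm_integral_le_integral_norm _
        _ = ∫ u : ℝ, t ^ |k| * ‖leipnikKer σ k u‖ :=
            integral_congr_ae (Filter.Eventually.of_forall fun u => leipnik_norm_eq σ k t hk ht u)
        _ = t ^ |k| * ∫ u : ℝ, ‖leipnikKer σ k u‖ := by
            simpa [smul_eq_mul] using integral_smul (t ^ |k|) (fun u => ‖leipnikKer σ k u‖)
    have hπ : (0:ℝ) < 1 / (2 * Real.pi) := by positivity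
    rw [norm_mul]
    have hnc : ‖(1 / (2 * (Real.pi:ℂ)) : ℂ)‖ = 1 / (2 * Real.pi) := by
      rw [show (1 / (2 * (Real.pi:ℂ)) : ℂ) = ((1 / (2 * Real.pi) : ℝ) : ℂ) by push_cast; ring]
      rw [Complex.norm_real, Real.norm_eq_abs, abs_of_pos hπ]
    rw [hnc, hC]
    have hI : (0:ℝ) ≤ ∫ u : ℝ, ‖leipnikKer σ k u‖ :=
      integral_nonneg fun u => norm_nonneg _
    have hns : ‖t ^ |k|‖ = t ^ |k| := by
      rw [Real.norm_eq_abs, _root_.abs_of_nonneg (Real.rpow_nonneg ht.le _)]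
    rw [hns]
    calc 1 / (2 * Real.pi) * ‖∫ (u : ℝ), Complex.exp (-(Real.log t:ℂ) * (↑k + ↑u * Complex.I)) * leipnikKer σ k u‖
        ≤ 1 / (2 * Real.pi) * (t ^ |k| * ∫ u : ℝ, ‖leipnikKer σ k u‖) :=
          mul_le_mul_of_nonneg_left h2 hπ.le
      _ = 1 / (2 * Real.pi) * (∫ u : ℝ, ‖leipnikKer σ k u‖) * t ^ |k| := by ring
  refine ⟨hbig, ?_⟩
  have hpow : Tendsto (fun t : ℝ => t ^ |k|) (nhdsWithin 0 (Ioi 0)) (nhds 0) := by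
    have h0 : |k| ≠ 0 := abs_ne_zero.mpr hk.ne
    have := (Real.continuousAt_rpow_const 0 |k| (Or.inr (abs_nonneg k))).tendsto
    rw [Real.zero_rpow h0] at this
    exact this.mono_left nhdsWithin_le_nhds
  exact hbig.trans_tendsto hpow
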